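/- arXiv:1404.2530 — 4 statements merged into one kernel-verified Lean document; each statement's English description precedes it below -/
import Mathlib

section
/- Let (W, n, M) be a transition block for a one-block factor code π from a one-step SFT X to a sofic shift Y, with |W| = t+1, and set A = π_b^{-1}(W)_0, B = π_b^{-1}(W)_n, C = π_b^{-1}(W)_t. If W' is another Y-block of length t'+1 with π_b^{-1}(W')_0 = A, π_b^{-1}(W')_{n'} = B for some 0 ≤ n' < t', and π_b^{-1}(W')_{t'} = C, such that P_{W_0…W_n}(A,B) = P_{W'_0…W'_{n'}}(A,B) and P_{W_n…W_t}(B,C) = P_{W'_{n'}…W'_{t'}}(B,C), then (W', n', M) is also a transition block of π. -/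
open List

/-- `U` is a (nonempty) block of the one-step SFT `X` determined by the
transition relation `TX`. -/
def IsXBlock {AX : Type*} (TX : AX → AX → Prop) (U : List AX) : Prop :=
  U ≠ [] ∧ U.Chain' TX

/-- The set of `X`-blocks mapping (symbol-wise, via `πb`) to the word `W`. -/
def preim {AX AY : Type*} (TX : AX → AX → Prop) (πb : AX → AY) (W : List AY) :
    Set (List AX) :=
  {U | IsXBlock TX U ∧ U.map πb = W}

/-- `W` is a block of the sofic shift `Y = π(X)`. -/
def IsYBlock {AX AY : Type*} (TX : AX → AX → Prop) (πb : AX → AY) (W : List AY) : Prop :=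
  (preim TX πb W).Nonempty

/-- `π_b^{-1}(W)_i`: the symbols occurring at position `i` in some preimage block of `W`. -/
def preimAt {AX AY : Type*} (TX : AX → AX → Prop) (πb : AX → AY) (W : List AY) (i : ℕ) :
    Set AX :=
  {a | ∃ U ∈ preim TX πb W, U[i]? = some a}

/-- The `W`-pairing: the set of (first symbol, last symbol) pairs realized by
preimage blocks of `W`. -/
def pairing {AX AY : Type*} (TX : AX → AX → Prop) (πb : AX → AY) (W : List AY) :
    Set (AX × AX) :=
  {p | ∃ U ∈ preim TX πb W, U.head? = some p.1 ∧ U.getLast? = some p.2}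

/-- `U ∈ π_b^{-1}(W)` is routable through `a` at time `n`. -/
def Routable {AX AY : Type*} (TX : AX → AX → Prop) (πb : AX → AY) (W : List AY) (n : ℕ)
    (a : AX) (U : List AX) : Prop :=
  ∃ U' ∈ preim TX πb W, U'.head? = U.head? ∧ U'[n]? = some a ∧ U'.getLast? = U.getLast?

/-- `(W, n, M)` is a transition block. -/
def IsTransBlock {AX AY : Type*} (TX : AX → AX → Prop) (πb : AX → AY) (W : List AY)
    (n : ℕ) (M : Finset AX) : Prop :=
  IsYBlock TX πb W ∧ 0 < n ∧ n < W.length - 1 ∧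
    (∀ a ∈ M, a ∈ preimAt TX πb W n) ∧
    ∀ U ∈ preim TX πb W, ∃ a ∈ M, Routable TX πb W n a U

section Aux

variable {AX AY : Type*} {TX : AX → AX → Prop} {πb : AX → AY} {W : List AY} {U : List AX}

lemma preim_length (h : U ∈ preim TX πb W) : U.length = W.length := by
  have := h.2; rw [← this, List.length_map]

lemma preim_take (h : U ∈ preim TX πb W) {k : ℕ} (hk : 0 < k) :
    U.take k ∈ preim TX πb (W.take k) := by
  obtain ⟨⟨hne, hch⟩, hmap⟩ := h
  refine ⟨⟨?_, hch.take k⟩, by rw [List.map_take, hmap]⟩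
  simp only [ne_eq, List.take_eq_nil_iff, not_or]
  exact ⟨by omega, hne⟩

lemma preim_drop (h : U ∈ preim TX πb W) {k : ℕ} (hk : k < W.length) :
    U.drop k ∈ preim TX πb (W.drop k) := by
  obtain ⟨⟨hne, hch⟩, hmap⟩ := h
  have hlen : U.length = W.length := by rw [← hmap, List.length_map]
  refine ⟨⟨?_, hch.drop k⟩, by rw [List.map_drop, hmap]⟩
  simp only [ne_eq, List.drop_eq_nil_iff, not_le]
  omega

lemma take_head? (hk : 0 < k) : (U.take k).head? = U.head? := by
  cases U with
  | nil => simp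
  | cons a t => cases k with
    | zero => omega
    | succ m => simp

lemma take_getLast? {k : ℕ} (hk : k < U.length) :
    (U.take (k + 1)).getLast? = U[k]? := by
  rw [List.getLast?_eq_getElem?]
  have hlen : (U.take (k+1)).length = k + 1 := by
    rw [List.length_take]; omega
  rw [hlen]
  simp only [Nat.add_sub_cancel, List.getElem?_take, hk]
  simp [Nat.lt_succ_self]

lemma drop_head? {k : ℕ} : (U.drop k).head? = U[k]? := by
  rw [List.head?_eq_getElem?, List.getElem?_drop]
  simp

lemma drop_getLast? {k : ℕ} (hk : k < U.length) :
    (U.drop k).getLast? = U.getLast? := by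
  rw [List.getLast?_eq_getElem?, List.getLast?_eq_getElem?, List.getElem?_drop,
    List.length_drop]
  congr 1
  omega

/-- Gluing lemma. -/
lemma preim_glue {V₁ V₂ : List AX} {n : ℕ} {b : AX}
    (h₁ : V₁ ∈ preim TX πb (W.take (n+1))) (h₂ : V₂ ∈ preim TX πb (W.drop n))
    (hb₁ : V₁.getLast? = some b) (hb₂ : V₂.head? = some b) (hn : n + 1 ≤ W.length) :
    V₁ ++ V₂.tail ∈ preim TX πb W ∧ (V₁ ++ V₂.tail).head? = V₁.head? ∧
      (V₁ ++ V₂.tail)[n]? = some b ∧ (V₁ ++ V₂.tail).getLast? = V₂.getLast? := by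
  obtain ⟨⟨hne₁, hch₁⟩, hmap₁⟩ := h₁
  obtain ⟨⟨hne₂, hch₂⟩, hmap₂⟩ := h₂
  have hlen₁ : V₁.length = n + 1 := by
    have := congrArg List.length hmap₁
    simp only [List.length_map, List.length_take] at this
    omega
  -- chain' of glued list
  have hchain : (V₁ ++ V₂.tail).Chain' TX := by
    unfold List.Chain' at hch₁ hch₂ ⊢
    rw [List.isChain_append]
    refine ⟨hch₁, hch₂.tail, ?_⟩
    intro x hx y hy
    rw [hb₁, Option.mem_some_iff] at hx
    subst hx
    obtain ⟨t, ht⟩ : ∃ t, V₂ = b :: t := by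
      cases V₂ with
      | nil => simp at hb₂
      | cons c t => simp at hb₂; exact ⟨t, by rw [hb₂]⟩
    subst ht
    simp only [List.tail_cons] at hy
    rw [List.isChain_cons] at hch₂
    exact hch₂.1 y hy
  have hmem : V₁ ++ V₂.tail ∈ preim TX πb W := by
    refine ⟨⟨by simp [hne₁], hchain⟩, ?_⟩
    rw [List.map_append, hmap₁, List.map_tail, hmap₂, List.tail_drop,
      List.take_append_drop]
  refine ⟨hmem, ?_, ?_, ?_⟩
  · rw [List.head?_append]
    cases V₁ with
    | nil => exact absurd rfl hne₁
    | cons a t => simp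
  · have hlt : n < V₁.length := by omega
    have hV₁n : V₁[n]? = some b := by
      rw [← hb₁, List.getLast?_eq_getElem?, hlen₁]
      norm_num
    simp only [List.getElem?_append, if_pos hlt, hV₁n]
  · cases V₂ with
    | nil => simp at hb₂
    | cons c t =>
      cases t with
      | nil =>
        simp only [List.tail_cons, List.append_nil]
        simp only [List.head?_cons, Option.some.injEq] at hb₂
        rw [hb₁, hb₂]
        simp
      | cons d s =>
        simp only [List.tail_cons]
        rw [List.getLast?_append,
          Option.or_of_isSome (by simp [List.getLast?_isSome]),
          List.getLast?_cons_cons]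

end Aux

/-- If `(W, n, M)` is a transition block and `W'` has the same endpoint/midpoint
preimage sets and the same pairings on the two halves, then `(W', n', M)` is
also a transition block. -/
theorem transBlock_transfer {AX AY : Type*} (TX : AX → AX → Prop) (πb : AX → AY)
    (W W' : List AY) (n n' : ℕ) (M : Finset AX)
    (hT : IsTransBlock TX πb W n M)
    (hW' : IsYBlock TX πb W')
    (hn'0 : 0 < n') (hn't : n' < W'.length - 1)
    (h0 : preimAt TX πb W' 0 = preimAt TX πb W 0)
    (hmid : preimAt TX πb W' n' = preimAt TX πb W n)
    (hend : preimAt TX πb W' (W'.length - 1) = preimAt TX πb W (W.length - 1))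
    (hP1 : pairing TX πb (W.take (n + 1)) = pairing TX πb (W'.take (n' + 1)))
    (hP2 : pairing TX πb (W.drop n) = pairing TX πb (W'.drop n')) :
    IsTransBlock TX πb W' n' M := by
  obtain ⟨hY, hn0, hnt, hM, hroute⟩ := hT
  have hnW : n + 1 ≤ W.length := by omega
  have hn'W : n' + 1 ≤ W'.length := by omega
  refine ⟨hW', hn'0, hn't, ?_, ?_⟩
  · intro a ha
    rw [hmid]
    exact hM a ha
  · -- main part
    intro U hU
    have hUlen : U.length = W'.length := preim_length hU
    have hUne : U ≠ [] := hU.1.1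
    -- symbols of U
    obtain ⟨u₀, hu₀⟩ : ∃ x, U.head? = some x := by
      cases U with
      | nil => exact absurd rfl hUne
      | cons a t => exact ⟨a, rfl⟩
    obtain ⟨b', hb'⟩ : ∃ x, U[n']? = some x := by
      rw [List.getElem?_eq_getElem (by omega)]
      exact ⟨_, rfl⟩
    obtain ⟨uₑ, huₑ⟩ : ∃ x, U.getLast? = some x := by
      cases h : U.getLast? with
      | none => rw [List.getLast?_eq_none_iff] at h; exact absurd h hUne
      | some x => exact ⟨x, rfl⟩
    -- U splits give pairings in W' halves
    have hUt : U.take (n'+1) ∈ preim TX πb (W'.take (n'+1)) := preim_take hU (by omega)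
    have hUd : U.drop n' ∈ preim TX πb (W'.drop n') := preim_drop hU (by omega)
    have hpair₁ : (u₀, b') ∈ pairing TX πb (W'.take (n'+1)) :=
      ⟨U.take (n'+1), hUt, by rw [take_head? (Nat.succ_pos n'), hu₀],
        by rw [take_getLast? (by omega), hb']⟩
    have hpair₂ : (b', uₑ) ∈ pairing TX πb (W'.drop n') :=
      ⟨U.drop n', hUd, by rw [drop_head?, hb'], by rw [drop_getLast? (by omega), huₑ]⟩
    -- transfer to W halves
    rw [← hP1] at hpair₁
    rw [← hP2] at hpair₂
    obtain ⟨V₁, hV₁, hV₁h, hV₁l⟩ := hpair₁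
    obtain ⟨V₂, hV₂, hV₂h, hV₂l⟩ := hpair₂
    -- glue into a preimage of W
    obtain ⟨hVmem, hVh, hVn, hVl⟩ := preim_glue hV₁ hV₂ hV₁l hV₂h hnW
    -- apply routability in W
    obtain ⟨a, haM, V', hV', hV'h, hV'n, hV'l⟩ := hroute _ hVmem
    have hV'len : V'.length = W.length := preim_length hV'
    -- split V' and transfer pairings back to W'
    have hV't : V'.take (n+1) ∈ preim TX πb (W.take (n+1)) := preim_take hV' (by omega)
    have hV'd : V'.drop n ∈ preim TX πb (W.drop n) := preim_drop hV' (by omega)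
    have hq₁ : (u₀, a) ∈ pairing TX πb (W.take (n+1)) :=
      ⟨V'.take (n+1), hV't,
        by rw [take_head? (Nat.succ_pos n), hV'h, hVh, hV₁h],
        by rw [take_getLast? (by omega), hV'n]⟩
    have hq₂ : (a, uₑ) ∈ pairing TX πb (W.drop n) :=
      ⟨V'.drop n, hV'd, by rw [drop_head?, hV'n],
        by rw [drop_getLast? (by omega), hV'l, hVl, hV₂l]⟩
    rw [hP1] at hq₁
    rw [hP2] at hq₂
    obtain ⟨U₁, hU₁, hU₁h, hU₁l⟩ := hq₁
    obtain ⟨U₂, hU₂, hU₂h, hU₂l⟩ := hq₂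
    obtain ⟨hU''mem, hU''h, hU''n, hU''l⟩ := preim_glue hU₁ hU₂ hU₁l hU₂h hn'W
    exact ⟨a, haM, U₁ ++ U₂.tail, hU''mem,
      by rw [hU''h, hU₁h, hu₀], hU''n, by rw [hU''l, hU₂l, huₑ]⟩
end

section
/- With the graphs G and G' as above (subset-construction graphs tracking preimage symbol sets of Y-blocks forward and backward respectively), if A ∈ S (reachable in G from some full-preimage vertex π_b^{-1}(b)) and A' ∈ S' (reaching some full-preimage vertex in G') with A ∩ A' ≠ ∅, then A ∩ A' = {a ∈ 𝒜(X) : ∃ W' ∈ π_b^{-1}(W) with W'_c = a}, where W is the Y-block obtained by concatenating a Y-block witnessing A ∈ S (of length c+1, ending at A) with a Y-block witnessing A' ∈ S' (starting at A'), overlapping at position c. In particular d*_π ≤ |A ∩ A'|. -/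
open List

/-- The fiber `π_b^{-1}(b)` of a `Y`-symbol. -/
def fiber {AX AY : Type*} [Fintype AX] [DecidableEq AY] (πb : AX → AY) (b : AY) :
    Finset AX :=
  Finset.univ.filter (fun a => πb a = b)

/-- `f = max_{w ∈ 𝒜(Y)} |π_b^{-1}(w)|`. -/
def fMax {AX AY : Type*} [Fintype AX] [Fintype AY] [DecidableEq AY] (πb : AX → AY) : ℕ :=
  Finset.univ.sup (fun b : AY => (fiber πb b).card)

/-- Edge of the forward subset-construction graph `G`. -/
def edgeG {AX AY : Type*} [Fintype AX] [DecidableEq AX] [DecidableEq AY]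
    (TX : AX → AX → Prop) [DecidableRel TX] (πb : AX → AY) :
    AY × Finset AX → AY × Finset AX → Prop := fun p q =>
  p.2 ⊆ fiber πb p.1 ∧ q.2 ⊆ fiber πb q.1 ∧ IsYBlock TX πb [p.1, q.1] ∧
    q.2 = (fiber πb q.1).filter (fun a' => ∃ a ∈ p.2, TX a a')

/-- Edge of the backward subset-construction graph `G'`. -/
def edgeG' {AX AY : Type*} [Fintype AX] [DecidableEq AX] [DecidableEq AY]
    (TX : AX → AX → Prop) [DecidableRel TX] (πb : AX → AY) :
    AY × Finset AX → AY × Finset AX → Prop := fun p q =>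
  p.2 ⊆ fiber πb p.1 ∧ q.2 ⊆ fiber πb q.1 ∧ IsYBlock TX πb [p.1, q.1] ∧
    p.2 = (fiber πb p.1).filter (fun a => ∃ a' ∈ q.2, TX a a')

/-- `p ∈ S`: reachable in `G` from a full-fiber vertex of `𝒰`. -/
def reachG {AX AY : Type*} [Fintype AX] [DecidableEq AX] [DecidableEq AY]
    (TX : AX → AX → Prop) [DecidableRel TX] (πb : AX → AY) (p : AY × Finset AX) : Prop :=
  ∃ b0 : AY, Relation.ReflTransGen (edgeG TX πb) (b0, fiber πb b0) p

/-- `p ∈ S'`: some full-fiber vertex of `𝒰` is reachable from `p` in `G'`. -/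
def reachG' {AX AY : Type*} [Fintype AX] [DecidableEq AX] [DecidableEq AY]
    (TX : AX → AX → Prop) [DecidableRel TX] (πb : AX → AY) (p : AY × Finset AX) : Prop :=
  ∃ b0 : AY, Relation.ReflTransGen (edgeG' TX πb) p (b0, fiber πb b0)

/-- `d*_π`: the minimum over `Y`-blocks `W` and positions `i` of `|π_b^{-1}(W)_i|`. -/
noncomputable def dstar {AX AY : Type*} (TX : AX → AX → Prop) (πb : AX → AY) : ℕ :=
  sInf {k | ∃ (W : List AY) (i : ℕ), IsYBlock TX πb W ∧ i < W.length ∧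
    (preimAt TX πb W i).ncard = k}

/-- `U` is a walk in `G` over the label word `W`. -/
def IsGWalk {AX AY : Type*} [Fintype AX] [DecidableEq AX] [DecidableEq AY]
    (TX : AX → AX → Prop) [DecidableRel TX] (πb : AX → AY)
    (W : List AY) (U : List (Finset AX)) : Prop :=
  U.length = W.length ∧
    (∀ (i : ℕ) (b : AY) (A : Finset AX), W[i]? = some b → U[i]? = some A → A ⊆ fiber πb b) ∧
    (∀ (i : ℕ) (b b' : AY) (A A' : Finset AX), W[i]? = some b → W[i + 1]? = some b' →
      U[i]? = some A → U[i + 1]? = some A' → edgeG TX πb (b, A) (b', A'))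

/-- `U` is a walk in `G'` over the label word `W`. -/
def IsG'Walk {AX AY : Type*} [Fintype AX] [DecidableEq AX] [DecidableEq AY]
    (TX : AX → AX → Prop) [DecidableRel TX] (πb : AX → AY)
    (W : List AY) (U : List (Finset AX)) : Prop :=
  U.length = W.length ∧
    (∀ (i : ℕ) (b : AY) (A : Finset AX), W[i]? = some b → U[i]? = some A → A ⊆ fiber πb b) ∧
    (∀ (i : ℕ) (b b' : AY) (A A' : Finset AX), W[i]? = some b → W[i + 1]? = some b' →
      U[i]? = some A → U[i + 1]? = some A' → edgeG' TX πb (b, A) (b', A'))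

section AuxLemmas

variable {AX AY : Type*} [Fintype AX] [DecidableEq AX] [DecidableEq AY]
  (TX : AX → AX → Prop) [DecidableRel TX] (πb : AX → AY)

lemma mem_fiber_aux {a : AX} {b : AY} : a ∈ fiber πb b ↔ πb a = b := by
  simp [fiber]

lemma mem_preim_singleton_aux {b : AY} {U : List AX} :
    U ∈ preim TX πb [b] ↔ ∃ a, U = [a] ∧ πb a = b := by
  constructor
  · rintro ⟨⟨hne, hch⟩, hmap⟩
    have hlen : U.length = 1 := by simpa using congrArg List.length hmap
    obtain ⟨a, rfl⟩ : ∃ a, U = [a] := by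
      match U, hlen with
      | [a], _ => exact ⟨a, rfl⟩
    exact ⟨a, rfl, by simpa using hmap⟩
  · rintro ⟨a, rfl, h⟩
    exact ⟨⟨by simp, List.isChain_singleton a⟩, by simp [h]⟩

lemma GWalk_tail {b : AY} {P : List AY} {A : Finset AX} {U : List (Finset AX)}
    (h : IsGWalk TX πb (b :: P) (A :: U)) : IsGWalk TX πb P U := by
  obtain ⟨hlen, hsub, hedge⟩ := h
  refine ⟨by simpa using hlen, ?_, ?_⟩
  · intro i c B hc hB
    exact hsub (i + 1) c B (by simpa using hc) (by simpa using hB)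
  · intro i c c' B B' hc hc' hB hB'
    exact hedge (i + 1) c c' B B' (by simpa using hc) (by simpa using hc')
      (by simpa using hB) (by simpa using hB')

lemma G'Walk_tail {b : AY} {P : List AY} {A : Finset AX} {U : List (Finset AX)}
    (h : IsG'Walk TX πb (b :: P) (A :: U)) : IsG'Walk TX πb P U := by
  obtain ⟨hlen, hsub, hedge⟩ := h
  refine ⟨by simpa using hlen, ?_, ?_⟩
  · intro i c B hc hB
    exact hsub (i + 1) c B (by simpa using hc) (by simpa using hB)
  · intro i c c' B B' hc hc' hB hB'
    exact hedge (i + 1) c c' B B' (by simpa using hc) (by simpa using hc')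
      (by simpa using hB) (by simpa using hB')

/-- Characterization of the last vertex of a `G`-walk. -/
lemma forward_char :
    ∀ (P : List AY) (b : AY) (U : List (Finset AX)) (A0 Al : Finset AX),
      IsGWalk TX πb (b :: P) (A0 :: U) → (A0 :: U).getLast? = some Al →
      ∀ a, a ∈ Al ↔ ∃ U1 ∈ preim TX πb (b :: P),
        (∃ h ∈ A0, U1.head? = some h) ∧ U1.getLast? = some a := by
  intro P
  induction P with
  | nil =>
    intro b U A0 Al hw hl a
    have hU : U = [] := by simpa using hw.1
    subst hU
    have hAl : A0 = Al := by simpa using hl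
    subst hAl
    have hsub : A0 ⊆ fiber πb b := hw.2.1 0 b A0 (by simp) (by simp)
    constructor
    · intro ha
      have hb : πb a = b := (mem_fiber_aux πb).mp (hsub ha)
      exact ⟨[a], ⟨⟨by simp, List.isChain_singleton a⟩, by simp [hb]⟩, ⟨a, ha, rfl⟩, rfl⟩
    · rintro ⟨U1, hU1, ⟨h, hhA, hhead⟩, hlast⟩
      obtain ⟨x, rfl, hx⟩ := (mem_preim_singleton_aux TX πb).mp hU1
      have hxh : x = h := by simpa using hhead
      have hxa : x = a := by simpa using hlast
      subst hxh; subst hxa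
      exact hhA
  | cons b1 P'' ih =>
    intro b U A0 Al hw hl a
    obtain ⟨A1, U'', rfl⟩ : ∃ A1 U'', U = A1 :: U'' := by
      cases U with
      | nil => have := hw.1; simp at this
      | cons A1 U'' => exact ⟨A1, U'', rfl⟩
    have hedge := hw.2.2 0 b b1 A0 A1 (by simp) (by simp) (by simp) (by simp)
    have hA1 : A1 = (fiber πb b1).filter (fun a' => ∃ a ∈ A0, TX a a') := hedge.2.2.2
    have htail : IsGWalk TX πb (b1 :: P'') (A1 :: U'') := GWalk_tail TX πb hw
    have hl' : (A1 :: U'').getLast? = some Al := by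
      rw [List.getLast?_cons_cons] at hl; exact hl
    rw [ih b1 U'' A1 Al htail hl' a]
    constructor
    · rintro ⟨U2, ⟨⟨hne2, hch2⟩, hmap2⟩, ⟨h1, hh1A1, hhead2⟩, hlast2⟩
      obtain ⟨hfib, h, hhA0, hTX⟩ : πb h1 = b1 ∧ ∃ h ∈ A0, TX h h1 := by
        rw [hA1, Finset.mem_filter] at hh1A1
        exact ⟨(mem_fiber_aux πb).mp hh1A1.1, hh1A1.2⟩
      have hhb : πb h = b := (mem_fiber_aux πb).mp (hedge.1 hhA0)
      obtain ⟨y, U3, rfl⟩ : ∃ y U3, U2 = y :: U3 := by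
        cases U2 with
        | nil => simp at hhead2
        | cons y U3 => exact ⟨y, U3, rfl⟩
      have hy : y = h1 := by simpa using hhead2
      subst hy
      refine ⟨h :: y :: U3, ⟨⟨by simp, ?_⟩, by simp [hhb, hmap2]⟩, ⟨h, hhA0, rfl⟩, ?_⟩
      · rw [List.Chain', List.isChain_cons]
        exact ⟨fun z hz => by simp at hz; subst hz; exact hTX, hch2⟩
      · rw [List.getLast?_cons_cons]
        exact hlast2
    · rintro ⟨U1, ⟨⟨hne1, hch1⟩, hmap1⟩, ⟨h, hhA0, hhead1⟩, hlast1⟩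
      obtain ⟨x, U2, rfl⟩ : ∃ x U2, U1 = x :: U2 := by
        cases U1 with
        | nil => simp at hhead1
        | cons x U2 => exact ⟨x, U2, rfl⟩
      have hx : x = h := by simpa using hhead1
      subst hx
      simp only [List.map_cons, List.cons.injEq] at hmap1
      obtain ⟨hxb, hmap2⟩ := hmap1
      obtain ⟨y, U3, rfl⟩ : ∃ y U3, U2 = y :: U3 := by
        cases U2 with
        | nil => simp at hmap2
        | cons y U3 => exact ⟨y, U3, rfl⟩
      simp only [List.map_cons, List.cons.injEq] at hmap2
      obtain ⟨hyb1, hmap3⟩ := hmap2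
      rw [List.Chain', List.isChain_cons] at hch1
      have hTXxy : TX x y := hch1.1 y rfl
      have hyA1 : y ∈ A1 := by
        rw [hA1, Finset.mem_filter]
        exact ⟨by simp [fiber, hyb1], ⟨x, hhA0, hTXxy⟩⟩
      refine ⟨y :: U3, ⟨⟨by simp, hch1.2⟩, by simp [hyb1, hmap3]⟩, ⟨y, hyA1, rfl⟩, ?_⟩
      rw [List.getLast?_cons_cons] at hlast1
      exact hlast1

/-- Characterization of the first vertex of a `G'`-walk. -/
lemma backward_char :
    ∀ (Q : List AY) (b : AY) (V : List (Finset AX)) (A0 Al : Finset AX),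
      IsG'Walk TX πb (b :: Q) (A0 :: V) → (A0 :: V).getLast? = some Al →
      ∀ a, a ∈ A0 ↔ ∃ U1 ∈ preim TX πb (b :: Q),
        U1.head? = some a ∧ ∃ l ∈ Al, U1.getLast? = some l := by
  intro Q
  induction Q with
  | nil =>
    intro b V A0 Al hw hl a
    have hV : V = [] := by simpa using hw.1
    subst hV
    have hAl : A0 = Al := by simpa using hl
    subst hAl
    have hsub : A0 ⊆ fiber πb b := hw.2.1 0 b A0 (by simp) (by simp)
    constructor
    · intro ha
      have hb : πb a = b := (mem_fiber_aux πb).mp (hsub ha)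
      exact ⟨[a], ⟨⟨by simp, List.isChain_singleton a⟩, by simp [hb]⟩, rfl, ⟨a, ha, rfl⟩⟩
    · rintro ⟨U1, hU1, hhead, ⟨l, hlA, hlast⟩⟩
      obtain ⟨x, rfl, hx⟩ := (mem_preim_singleton_aux TX πb).mp hU1
      have hxa : x = a := by simpa using hhead
      have hxl : x = l := by simpa using hlast
      subst hxa; subst hxl
      exact hlA
  | cons b1 Q'' ih =>
    intro b V A0 Al hw hl a
    obtain ⟨A1, V'', rfl⟩ : ∃ A1 V'', V = A1 :: V'' := by
      cases V with
      | nil => have := hw.1; simp at this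
      | cons A1 V'' => exact ⟨A1, V'', rfl⟩
    have hedge := hw.2.2 0 b b1 A0 A1 (by simp) (by simp) (by simp) (by simp)
    have hA0 : A0 = (fiber πb b).filter (fun a => ∃ a' ∈ A1, TX a a') := hedge.2.2.2
    have htail : IsG'Walk TX πb (b1 :: Q'') (A1 :: V'') := G'Walk_tail TX πb hw
    have hl' : (A1 :: V'').getLast? = some Al := by
      rw [List.getLast?_cons_cons] at hl; exact hl
    have IH := ih b1 V'' A1 Al htail hl'
    constructor
    · intro haA0
      obtain ⟨hfib, a1, ha1A1, hTX⟩ : πb a = b ∧ ∃ a1 ∈ A1, TX a a1 := by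
        rw [hA0, Finset.mem_filter] at haA0
        exact ⟨(mem_fiber_aux πb).mp haA0.1, haA0.2⟩
      obtain ⟨U2, ⟨⟨hne2, hch2⟩, hmap2⟩, hhead2, l, hlA, hlast2⟩ := (IH a1).mp ha1A1
      obtain ⟨y, U3, rfl⟩ : ∃ y U3, U2 = y :: U3 := by
        cases U2 with
        | nil => simp at hhead2
        | cons y U3 => exact ⟨y, U3, rfl⟩
      have hy : y = a1 := by simpa using hhead2
      subst hy
      refine ⟨a :: y :: U3, ⟨⟨by simp, ?_⟩, by simp [hfib, hmap2]⟩, rfl, ⟨l, hlA, ?_⟩⟩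
      · rw [List.Chain', List.isChain_cons]
        exact ⟨fun z hz => by simp at hz; subst hz; exact hTX, hch2⟩
      · rw [List.getLast?_cons_cons]
        exact hlast2
    · rintro ⟨U1, ⟨⟨hne1, hch1⟩, hmap1⟩, hhead1, l, hlA, hlast1⟩
      obtain ⟨x, U2, rfl⟩ : ∃ x U2, U1 = x :: U2 := by
        cases U1 with
        | nil => simp at hhead1
        | cons x U2 => exact ⟨x, U2, rfl⟩
      have hx : x = a := by simpa using hhead1
      subst hx
      simp only [List.map_cons, List.cons.injEq] at hmap1
      obtain ⟨hxb, hmap2⟩ := hmap1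
      obtain ⟨y, U3, rfl⟩ : ∃ y U3, U2 = y :: U3 := by
        cases U2 with
        | nil => simp at hmap2
        | cons y U3 => exact ⟨y, U3, rfl⟩
      simp only [List.map_cons, List.cons.injEq] at hmap2
      obtain ⟨hyb1, hmap3⟩ := hmap2
      rw [List.Chain', List.isChain_cons] at hch1
      have hTXxy : TX x y := hch1.1 y rfl
      have hyA1 : y ∈ A1 := by
        apply (IH y).mpr
        refine ⟨y :: U3, ⟨⟨by simp, hch1.2⟩, by simp [hyb1, hmap3]⟩, rfl, ⟨l, hlA, ?_⟩⟩
        rw [List.getLast?_cons_cons] at hlast1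
        exact hlast1
      rw [hA0, Finset.mem_filter]
      exact ⟨by simp [fiber, hxb], ⟨y, hyA1, hTXxy⟩⟩

lemma drop_last_eq_aux {α : Type*} :
    ∀ (l : List α) (x : α), l.getLast? = some x → l.drop (l.length - 1) = [x] := by
  intro l
  induction l with
  | nil => intro x h; simp at h
  | cons a t ih =>
    intro x h
    cases t with
    | nil =>
      have : a = x := by simpa using h
      simp [this]
    | cons b t' =>
      rw [List.getLast?_cons_cons] at h
      have h2 := ih x h
      simpa using h2

end AuxLemmas

/-- If `A` is the endpoint of a `G`-walk over `P` starting at a full-fiber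
vertex, `A'` is the start of a `G'`-walk over `Q` ending at a full-fiber
vertex, and `A ∩ A' ≠ ∅`, then `A ∩ A'` is exactly the set of symbols occurring
at position `|P| - 1` of preimage blocks of the overlapped concatenation
`P · Q`, and in particular `d*_π ≤ |A ∩ A'|`. -/
theorem intersection_eq_preimAt {AX AY : Type*}
    [Fintype AX] [DecidableEq AX] [DecidableEq AY]
    (TX : AX → AX → Prop) [DecidableRel TX] (πb : AX → AY)
    (P Q : List AY) (U V : List (Finset AX)) (A A' : Finset AX)
    (hP : P ≠ []) (hQ : Q ≠ [])
    (hU : IsGWalk TX πb P U) (hUhead : U.head? = P.head?.map (fiber πb))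
    (hUlast : U.getLast? = some A)
    (hV : IsG'Walk TX πb Q V) (hVlast : V.getLast? = Q.getLast?.map (fiber πb))
    (hVhead : V.head? = some A')
    (hAA' : (A ∩ A').Nonempty) :
    (↑(A ∩ A') : Set AX) = preimAt TX πb (P ++ Q.tail) (P.length - 1) ∧
    dstar TX πb ≤ (A ∩ A').card := by
  classical
  obtain ⟨pb, Pt, rfl⟩ : ∃ pb Pt, P = pb :: Pt := by
    cases P with
    | nil => exact absurd rfl hP
    | cons pb Pt => exact ⟨pb, Pt, rfl⟩
  obtain ⟨qh, Qt, rfl⟩ : ∃ qh Qt, Q = qh :: Qt := by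
    cases Q with
    | nil => exact absurd rfl hQ
    | cons qh Qt => exact ⟨qh, Qt, rfl⟩
  -- decompose U
  obtain ⟨Ut, rfl⟩ : ∃ Ut, U = fiber πb pb :: Ut := by
    cases U with
    | nil => simp at hUhead
    | cons B Ut =>
      have hB : B = fiber πb pb := by simpa using hUhead
      exact ⟨Ut, by rw [hB]⟩
  -- decompose V
  obtain ⟨Vt, rfl⟩ : ∃ Vt, V = A' :: Vt := by
    cases V with
    | nil => simp at hVhead
    | cons B Vt =>
      have hB : B = A' := by simpa using hVhead
      exact ⟨Vt, by rw [hB]⟩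
  obtain ⟨qlast, hqlast⟩ : ∃ x, (qh :: Qt).getLast? = some x := by
    have := List.getLast?_isSome (l := qh :: Qt)
    rw [Option.isSome_iff_exists] at this
    exact this.mpr (by simp)
  obtain ⟨plast, hplast⟩ : ∃ x, (pb :: Pt).getLast? = some x := by
    have := List.getLast?_isSome (l := pb :: Pt)
    rw [Option.isSome_iff_exists] at this
    exact this.mpr (by simp)
  have hVlast' : (A' :: Vt).getLast? = some (fiber πb qlast) := by
    rw [hVlast, hqlast]; rfl
  -- characterizations
  have hAchar : ∀ a, a ∈ A ↔ ∃ U1 ∈ preim TX πb (pb :: Pt), U1.getLast? = some a := by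
    intro a
    rw [forward_char TX πb Pt pb Ut (fiber πb pb) A hU hUlast a]
    constructor
    · rintro ⟨U1, hU1, _, hlast⟩
      exact ⟨U1, hU1, hlast⟩
    · rintro ⟨U1, hU1, hlast⟩
      obtain ⟨x, U2, rfl⟩ : ∃ x U2, U1 = x :: U2 := by
        cases U1 with
        | nil => exact absurd rfl hU1.1.1
        | cons x U2 => exact ⟨x, U2, rfl⟩
      have hxb : πb x = pb := by
        have := hU1.2
        simp only [List.map_cons, List.cons.injEq] at this
        exact this.1
      exact ⟨x :: U2, hU1, ⟨x, (mem_fiber_aux πb).mpr hxb, rfl⟩, hlast⟩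
  have hA'char : ∀ a, a ∈ A' ↔ ∃ U2 ∈ preim TX πb (qh :: Qt), U2.head? = some a := by
    intro a
    rw [backward_char TX πb Qt qh Vt A' (fiber πb qlast) hV hVlast' a]
    constructor
    · rintro ⟨U2, hU2, hhead, _⟩
      exact ⟨U2, hU2, hhead⟩
    · rintro ⟨U2, hU2, hhead⟩
      obtain ⟨l, hl⟩ : ∃ l, U2.getLast? = some l := by
        rw [Option.isSome_iff_exists.symm, List.getLast?_isSome]
        exact hU2.1.1
      have hlq : πb l = qlast := by
        have h1 : (U2.map πb).getLast? = some qlast := by rw [hU2.2]; exact hqlast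
        rw [List.getLast?_map, hl] at h1
        simpa using h1
      exact ⟨U2, hU2, hhead, ⟨l, (mem_fiber_aux πb).mpr hlq, hl⟩⟩
  -- the key gluing equivalence
  set n := (pb :: Pt).length with hn
  have hnpos : 0 < n := by simp [hn]
  have key : ∀ a, (a ∈ A ∧ a ∈ A') ↔
      a ∈ preimAt TX πb ((pb :: Pt) ++ (qh :: Qt).tail) (n - 1) := by
    intro a
    constructor
    · rintro ⟨haA, haA'⟩
      obtain ⟨U1, ⟨⟨hne1, hch1⟩, hmap1⟩, hlast1⟩ := (hAchar a).mp haA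
      obtain ⟨U2, ⟨⟨hne2, hch2⟩, hmap2⟩, hhead2⟩ := (hA'char a).mp haA'
      obtain ⟨y, U3, rfl⟩ : ∃ y U3, U2 = y :: U3 := by
        cases U2 with
        | nil => simp at hhead2
        | cons y U3 => exact ⟨y, U3, rfl⟩
      have hy : y = a := by simpa using hhead2
      subst hy
      rw [List.Chain', List.isChain_cons] at hch2
      have hlen1 : U1.length = n := by
        rw [hn, ← hmap1, List.length_map]
      refine ⟨U1 ++ U3, ⟨⟨by simp [hne1], ?_⟩, ?_⟩, ?_⟩
      · rw [List.Chain', List.isChain_append]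
        refine ⟨hch1, hch2.2, ?_⟩
        intro x hx z hz
        rw [hlast1] at hx
        simp at hx
        subst hx
        exact hch2.1 z hz
      · rw [List.map_append, hmap1]
        congr 1
        have : (y :: U3).map πb = qh :: Qt := hmap2
        simp only [List.map_cons, List.cons.injEq] at this
        simp [this.2]
      · rw [List.getElem?_append, if_pos (by omega : n - 1 < U1.length)]
        rw [← hlen1, ← List.getLast?_eq_getElem?]
        exact hlast1
    · rintro ⟨U', ⟨⟨hne, hch⟩, hmap⟩, hidx⟩
      -- first, plast = qh from nonemptiness of A ∩ A'
      obtain ⟨a0, ha0⟩ := hAA'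
      rw [Finset.mem_inter] at ha0
      have hpq : plast = qh := by
        obtain ⟨U1, hU1, hlast1⟩ := (hAchar a0).mp ha0.1
        obtain ⟨U2, hU2, hhead2⟩ := (hA'char a0).mp ha0.2
        have h1 : (U1.map πb).getLast? = some plast := by rw [hU1.2]; exact hplast
        rw [List.getLast?_map, hlast1] at h1
        have h2 : (U2.map πb).head? = some qh := by rw [hU2.2]; rfl
        rw [List.head?_map, hhead2] at h2
        simp at h1 h2
        rw [← h1, ← h2]
      have hlenU' : U'.length = n + Qt.length := by
        have h := congrArg List.length hmap
        simp at h
        simp only [hn, List.length_cons]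
        omega
      constructor
      · -- a ∈ A
        apply (hAchar _).mpr
        refine ⟨U'.take n, ⟨⟨?_, hch.take n⟩, ?_⟩, ?_⟩
        · intro hnil
          have h0 := congrArg List.length hnil
          rw [List.length_take, hlenU'] at h0
          simp at h0
        · rw [List.map_take, hmap, hn, List.take_left]
        · rw [List.getLast?_eq_getElem?]
          have hlent : (U'.take n).length = n := by
            rw [List.length_take]; omega
          rw [hlent, List.getElem?_take, if_pos (by omega)]
          exact hidx
      · -- a ∈ A'
        apply (hA'char _).mpr
        refine ⟨U'.drop (n - 1), ⟨⟨?_, hch.drop (n - 1)⟩, ?_⟩, ?_⟩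
        · intro hnil
          have h0 := congrArg List.length hnil
          rw [List.length_drop, hlenU'] at h0
          simp at h0
          omega
        · rw [List.map_drop, hmap]
          rw [List.drop_append_of_le_length (by omega)]
          rw [show ((pb :: Pt).drop (n - 1)) = [plast] from drop_last_eq_aux _ _ hplast]
          simp [hpq]
        · rw [List.head?_drop]
          exact hidx
  have hset : (↑(A ∩ A') : Set AX) =
      preimAt TX πb ((pb :: Pt) ++ (qh :: Qt).tail) (n - 1) := by
    ext a
    simp only [Finset.coe_inter, Set.mem_inter_iff, Finset.mem_coe]
    exact key a
  refine ⟨hset, ?_⟩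
  obtain ⟨a0, ha0⟩ := hAA'
  have ha0' := Finset.mem_inter.mp ha0
  obtain ⟨U', hU', -⟩ := (key a0).mp ha0'
  have hY : IsYBlock TX πb ((pb :: Pt) ++ (qh :: Qt).tail) := ⟨U', hU'⟩
  apply Nat.sInf_le
  refine ⟨(pb :: Pt) ++ (qh :: Qt).tail, n - 1, hY, ?_, ?_⟩
  · rw [List.length_append]
    omega
  · rw [← hset, Set.ncard_coe_finset]
end

section
/- Let π be a one-block factor code from a one-step SFT X to a sofic shift Y, let W be a Y-block of length n+1 with A = π_b^{-1}(W)_0, and suppose positions k < r ≤ n satisfy W_k = W_r, π_b^{-1}(W)_k = π_b^{-1}(W)_r = D, and P_{W_0…W_k}(A,D) = P_{W_0…W_r}(A,D). Then the excised block Z = W_0…W_k W_{r+1}…W_n is a legal Y-block with π_b^{-1}(Z)_0 = A, π_b^{-1}(Z)_{s} = π_b^{-1}(W)_n (where s = n − (r − k)), and P_Z(A, π_b^{-1}(W)_n) = P_W(A, π_b^{-1}(W)_n). -/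
open List

section AuxExcision

variable {AX AY : Type*} {TX : AX → AX → Prop} {πb : AX → AY}

private lemma chain'_rel {U : List AX} (h : U.Chain' TX) {i : ℕ} {a b : AX}
    (ha : U[i]? = some a) (hb : U[i + 1]? = some b) : TX a b := by
  rw [List.Chain', List.isChain_iff_getElem] at h
  rw [List.getElem?_eq_some_iff] at ha hb
  obtain ⟨h1, rfl⟩ := ha
  obtain ⟨h2, rfl⟩ := hb
  simpa using h i (by omega)

private lemma length_mem_preim {W : List AY} {U : List AX} (h : U ∈ preim TX πb W) :
    U.length = W.length := by
  have := congrArg List.length h.2; simpa using this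

private lemma take_mem_preim {B C : List AY} {U : List AX}
    (h : U ∈ preim TX πb (B ++ C)) (hB : B ≠ []) :
    U.take B.length ∈ preim TX πb B := by
  obtain ⟨⟨hne, hch⟩, hmap⟩ := h
  have hlen : U.length = B.length + C.length := by
    have := congrArg List.length hmap; simpa using this
  have hBpos : 0 < B.length := List.length_pos_iff.mpr hB
  have hl : (U.take B.length).length = B.length := by
    rw [List.length_take]; omega
  refine ⟨⟨List.ne_nil_of_length_pos (by omega), hch.prefix (List.take_prefix _ _)⟩, ?_⟩
  rw [List.map_take, hmap, List.take_left]

private lemma getLast?_drop_of_lt {U : List AX} {n : ℕ} (h : n < U.length) :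
    (U.drop n).getLast? = U.getLast? := by
  rw [List.getLast?_eq_getElem?, List.getLast?_eq_getElem?, List.length_drop,
    List.getElem?_drop]
  congr 1
  omega

private lemma splice {A B C : List AY} {V1 V2 : List AX}
    (h1 : V1 ∈ preim TX πb A) (h2 : V2 ∈ preim TX πb (B ++ C)) (hB : B ≠ [])
    (hlink : V2[B.length - 1]? = V1.getLast?) :
    ∃ U ∈ preim TX πb (A ++ C), U.head? = V1.head? ∧ U.getLast? = V2.getLast? := by
  obtain ⟨⟨hne1, hch1⟩, hmap1⟩ := h1
  obtain ⟨⟨hne2, hch2⟩, hmap2⟩ := h2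
  have hlen2 : V2.length = B.length + C.length := by
    have := congrArg List.length hmap2; simpa using this
  have hBpos : 0 < B.length := List.length_pos_iff.mpr hB
  refine ⟨V1 ++ V2.drop B.length, ⟨⟨?_, ?_⟩, ?_⟩, ?_, ?_⟩
  · simp [hne1]
  · rw [List.Chain', List.isChain_append]
    refine ⟨hch1, hch2.suffix (List.drop_suffix _ _), ?_⟩
    intro x hx y hy
    simp only [Option.mem_def] at hx hy
    rw [List.head?_drop] at hy
    exact chain'_rel hch2 (hlink.trans hx) (by rw [Nat.sub_add_cancel hBpos]; exact hy)
  · rw [List.map_append, List.map_drop, hmap1, hmap2, List.drop_left]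
  · rcases List.exists_cons_of_ne_nil hne1 with ⟨a, t, rfl⟩
    simp
  · by_cases hC : C = []
    · subst hC
      simp only [List.length_nil, Nat.add_zero] at hlen2
      have hd : V2.drop B.length = [] := List.drop_eq_nil_of_le (by omega)
      rw [hd, List.append_nil, List.getLast?_eq_getElem? (l := V2), hlen2, ← hlink]
    · have hCpos : 0 < C.length := List.length_pos_iff.mpr hC
      have hd : V2.drop B.length ≠ [] := by
        apply List.ne_nil_of_length_pos
        rw [List.length_drop]; omega
      rw [List.getLast?_append_of_ne_nil _ hd]
      exact getLast?_drop_of_lt (by omega)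

private lemma pairing_splice {A B C : List AY} (hB : B ≠ [])
    (h : pairing TX πb B ⊆ pairing TX πb A) :
    pairing TX πb (B ++ C) ⊆ pairing TX πb (A ++ C) := by
  rintro ⟨a, b⟩ ⟨U, hU, hhd, hlast⟩
  have hBpos : 0 < B.length := List.length_pos_iff.mpr hB
  have hT : U.take B.length ∈ preim TX πb B := take_mem_preim hU hB
  have hTne : U.take B.length ≠ [] := hT.1.1
  obtain ⟨c, hc⟩ := Option.isSome_iff_exists.mp (List.getLast?_isSome.mpr hTne)
  have hThd : (U.take B.length).head? = some a := by
    rw [List.head?_eq_getElem?, List.getElem?_take, if_pos hBpos,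
      ← List.head?_eq_getElem?, hhd]
  have hmem : ((a, c) : AX × AX) ∈ pairing TX πb B := ⟨U.take B.length, hT, hThd, hc⟩
  obtain ⟨V, hV, hVhd, hVlast⟩ := h hmem
  have hTlen : (U.take B.length).length = B.length := length_mem_preim hT
  have hlink : U[B.length - 1]? = V.getLast? := by
    rw [hVlast, ← hc, List.getLast?_eq_getElem?, hTlen, List.getElem?_take,
      if_pos (by omega)]
  obtain ⟨U', hU', hhd', hlast'⟩ := splice hV hU hB hlink
  exact ⟨U', hU', by rw [hhd', hVhd], by rw [hlast', hlast]⟩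

private lemma mem_preimAt_zero {W : List AY} {a : AX} :
    a ∈ preimAt TX πb W 0 ↔ ∃ b, (a, b) ∈ pairing TX πb W := by
  constructor
  · rintro ⟨U, hU, hgetU⟩
    have hne := hU.1.1
    obtain ⟨y, hy⟩ := Option.isSome_iff_exists.mp (List.getLast?_isSome.mpr hne)
    exact ⟨y, U, hU, by rw [List.head?_eq_getElem?, hgetU], hy⟩
  · rintro ⟨b, U, hU, hh, hl⟩
    exact ⟨U, hU, by rw [← List.head?_eq_getElem?, hh]⟩

private lemma mem_preimAt_last {W : List AY} {a : AX} :
    a ∈ preimAt TX πb W (W.length - 1) ↔ ∃ b, (b, a) ∈ pairing TX πb W := by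
  constructor
  · rintro ⟨U, hU, hgetU⟩
    have hne := hU.1.1
    obtain ⟨y, hy⟩ := Option.isSome_iff_exists.mp (List.isSome_head?.mpr hne)
    refine ⟨y, U, hU, hy, ?_⟩
    rw [List.getLast?_eq_getElem?, length_mem_preim hU, hgetU]
  · rintro ⟨b, U, hU, hh, hl⟩
    refine ⟨U, hU, ?_⟩
    rw [← length_mem_preim hU, ← List.getLast?_eq_getElem?, hl]

end AuxExcision

/-- Excision: if two positions `k < r` of a `Y`-block `W` carry the same
symbol, the same preimage symbol set, and the same prefix pairing, then the
excised word `Z = W_0…W_k W_{r+1}…W_n` is a legal `Y`-block with the same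
endpoint preimage sets and the same end-to-end pairing as `W`. -/
theorem excision {AX AY : Type*} (TX : AX → AX → Prop) (πb : AX → AY)
    (W : List AY) (k r : ℕ)
    (hW : IsYBlock TX πb W) (hkr : k < r) (hr : r < W.length)
    (hsym : W[k]? = W[r]?)
    (hset : preimAt TX πb W k = preimAt TX πb W r)
    (hpair : pairing TX πb (W.take (k + 1)) = pairing TX πb (W.take (r + 1))) :
    IsYBlock TX πb (W.take (k + 1) ++ W.drop (r + 1)) ∧
    preimAt TX πb (W.take (k + 1) ++ W.drop (r + 1)) 0 = preimAt TX πb W 0 ∧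
    preimAt TX πb (W.take (k + 1) ++ W.drop (r + 1))
        ((W.take (k + 1) ++ W.drop (r + 1)).length - 1)
      = preimAt TX πb W (W.length - 1) ∧
    pairing TX πb (W.take (k + 1) ++ W.drop (r + 1)) = pairing TX πb W := by
  have hPne : W.take (k + 1) ≠ [] := by
    apply List.ne_nil_of_length_pos
    rw [List.length_take]; omega
  have hQne : W.take (r + 1) ≠ [] := by
    apply List.ne_nil_of_length_pos
    rw [List.length_take]; omega
  have hQC : W.take (r + 1) ++ W.drop (r + 1) = W := List.take_append_drop _ _
  have hsub1 : pairing TX πb (W.take (k + 1) ++ W.drop (r + 1)) ⊆ pairing TX πb W := by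
    have := pairing_splice (C := W.drop (r + 1)) hPne hpair.le
    rwa [hQC] at this
  have hsub2 : pairing TX πb W ⊆ pairing TX πb (W.take (k + 1) ++ W.drop (r + 1)) := by
    have := pairing_splice (C := W.drop (r + 1)) hQne hpair.ge
    rwa [hQC] at this
  have hpairZ : pairing TX πb (W.take (k + 1) ++ W.drop (r + 1)) = pairing TX πb W :=
    Set.Subset.antisymm hsub1 hsub2
  refine ⟨?_, ?_, ?_, hpairZ⟩
  · obtain ⟨U, hU⟩ := hW
    have hne := hU.1.1
    obtain ⟨x, hx⟩ := Option.isSome_iff_exists.mp (List.isSome_head?.mpr hne)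
    obtain ⟨y, hy⟩ := Option.isSome_iff_exists.mp (List.getLast?_isSome.mpr hne)
    obtain ⟨U', hU', -, -⟩ := hsub2 (⟨U, hU, hx, hy⟩ : ((x, y) : AX × AX) ∈ pairing TX πb W)
    exact ⟨U', hU'⟩
  · ext a
    rw [mem_preimAt_zero, mem_preimAt_zero, hpairZ]
  · ext a
    rw [mem_preimAt_last, mem_preimAt_last, hpairZ]
end

section
/- Let π be a finite-to-one one-block factor code from a one-step SFT X onto an irreducible sofic shift Y, and let W be a magic block with magic coordinate c, i.e., |{a : ∃ W' ∈ π_b^{-1}(W), W'_c = a}| = d*_π. With G and G' the forward and backward subset-construction graphs, let Ū be the unique G-walk over W_0…W_c starting at π_b^{-1}(W_0), and V̄ the unique G'-walk over W_c…W_k ending at π_b^{-1}(W_k). Then Ū_c ∈ S, V̄_c ∈ S', and Ū_c ∩ V̄_c = {a : ∃ W' ∈ π_b^{-1}(W), W'_c = a}; hence min{|A ∩ A'| : A ∈ S, A' ∈ S', A ∩ A' ≠ ∅} ≤ d*_π. -/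
open List

set_option linter.unusedSectionVars false

section Aux
variable {AX AY : Type*} [Fintype AX] [DecidableEq AX] [DecidableEq AY]
  (TX : AX → AX → Prop) [DecidableRel TX] (πb : AX → AY)

lemma mem_fiber_iff (a : AX) (b : AY) : a ∈ fiber πb b ↔ πb a = b := by
  simp [fiber]

lemma preim_length_s12 {Z : List AY} {P : List AX} (h : P ∈ preim TX πb Z) :
    P.length = Z.length := by
  simpa using congrArg List.length h.2

lemma preim_chain_rel {Z : List AY} {P : List AX} (h : P ∈ preim TX πb Z) {i : ℕ}
    (hi : i + 1 < P.length) : TX P[i] P[i+1] := by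
  have := h.1.2
  rw [show List.Chain' TX P = List.IsChain TX P from rfl, List.isChain_iff_getElem] at this
  simpa using this i (by omega)

lemma preim_symbol {Z : List AY} {P : List AX} (h : P ∈ preim TX πb Z) {i : ℕ} {a : AX}
    (hi : P[i]? = some a) : Z[i]? = some (πb a) := by
  rw [← h.2, List.getElem?_map, hi]; rfl

lemma preim_take_s12 {Z : List AY} {P : List AX} (h : P ∈ preim TX πb Z) {n : ℕ} (hn : 0 < n) :
    P.take n ∈ preim TX πb (Z.take n) := by
  refine ⟨⟨?_, h.1.2.take n⟩, by rw [← h.2, List.map_take]⟩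
  simp [List.take_eq_nil_iff, h.1.1]; omega

lemma preim_drop_s12 {Z : List AY} {P : List AX} (h : P ∈ preim TX πb Z) {n : ℕ}
    (hn : n < Z.length) : P.drop n ∈ preim TX πb (Z.drop n) := by
  have hl := preim_length_s12 TX πb h
  refine ⟨⟨?_, h.1.2.drop n⟩, by rw [← h.2, List.map_drop]⟩
  simp [List.drop_eq_nil_iff]; omega

lemma preim_singleton {b : AY} {a : AX} (h : πb a = b) : [a] ∈ preim TX πb [b] :=
  ⟨⟨by simp, List.isChain_singleton a⟩, by simp [h]⟩

lemma gwalk_spec {Z : List AY} {U : List (Finset AX)} (hU : IsGWalk TX πb Z U)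
    (hhead : U.head? = Z.head?.map (fiber πb)) :
    ∀ i, i < Z.length → ∀ A : Finset AX, U[i]? = some A →
      ∀ a, a ∈ A ↔ ∃ P ∈ preim TX πb (Z.take (i + 1)), P.getLast? = some a := by
  obtain ⟨hlen, hsub, hedge⟩ := hU
  intro i
  induction i with
  | zero =>
    intro hi A hA a
    have hU0 : U[0]? = some (fiber πb Z[0]) := by
      rw [← List.head?_eq_getElem?, hhead, List.head?_eq_getElem?,
        List.getElem?_eq_getElem hi]
      rfl
    rw [hA] at hU0
    have hAf : A = fiber πb Z[0] := by injection hU0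
    have htake : Z.take 1 = [Z[0]] := by
      rw [List.take_succ, List.getElem?_eq_getElem hi]; simp
    subst hAf
    rw [mem_fiber_iff]
    constructor
    · intro ha
      exact ⟨[a], by rw [htake]; exact preim_singleton TX πb ha, by simp⟩
    · rintro ⟨P, hP, hPl⟩
      rw [htake] at hP
      have h1 : P.length = 1 := preim_length_s12 TX πb hP
      have h0 : P[0]? = some a := by
        rw [← hPl, List.getLast?_eq_getElem?, h1]
      have := preim_symbol TX πb hP h0
      simp at this
      exact this.symm
  | succ i ih =>
    intro hi A' hA' a'
    have hi' : i < Z.length := by omega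
    have hiU : i < U.length := by omega
    obtain ⟨A, hA⟩ : ∃ A, U[i]? = some A := ⟨U[i], List.getElem?_eq_getElem hiU⟩
    have hedge_i := hedge i Z[i] Z[i+1] A A' (List.getElem?_eq_getElem hi')
      (List.getElem?_eq_getElem hi) hA hA'
    obtain ⟨-, -, -, hA'eq⟩ := hedge_i
    dsimp only at hA'eq
    have ihA := ih hi' A hA
    have htake : Z.take (i + 2) = Z.take (i + 1) ++ [Z[i+1]] := by
      rw [List.take_succ, List.getElem?_eq_getElem hi]; rfl
    constructor
    · intro ha'
      rw [hA'eq, Finset.mem_filter] at ha'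
      obtain ⟨hfa', a, haA, hT⟩ := ha'
      rw [mem_fiber_iff] at hfa'
      obtain ⟨P, hP, hPl⟩ := (ihA a).1 haA
      refine ⟨P ++ [a'], ⟨⟨by simp, ?_⟩, ?_⟩, by simp⟩
      · refine hP.1.2.append (List.isChain_singleton a') ?_
        intro x hx y hy
        simp only [List.head?_cons, Option.mem_some_iff] at hy
        rw [hPl] at hx
        simp only [Option.mem_some_iff] at hx
        subst hx
        subst hy
        exact hT
      · rw [List.map_append, hP.2, htake]
        simp [hfa']
    · rintro ⟨Q, hQ, hQl⟩
      have hQlen : Q.length = i + 2 := by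
        have := preim_length_s12 TX πb hQ
        rw [this]
        simp; omega
      have hQtake : Q.take (i + 1) ∈ preim TX πb (Z.take (i + 1)) := by
        have := preim_take_s12 TX πb hQ (n := i + 1) (by omega)
        rwa [List.take_take, show min (i+1) (i+2) = i + 1 by omega] at this
      have hQi1 : Q[i+1]? = some a' := by
        have hl1 : Q.length - 1 = i + 1 := by omega
        rw [← hQl, List.getLast?_eq_getElem?, hl1]
      have hQival : (Q.take (i+1)).getLast? = some Q[i] := by
        have hlq : (Q.take (i+1)).length - 1 = i := by simp; omega
        rw [List.getLast?_eq_getElem?, hlq, List.getElem?_take, if_pos (by omega)]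
        exact List.getElem?_eq_getElem (show i < Q.length by omega)
      have haA : Q[i] ∈ A := (ihA Q[i]).2 ⟨Q.take (i+1), hQtake, hQival⟩
      rw [hA'eq, Finset.mem_filter, mem_fiber_iff]
      have ha'val : Q[i+1] = a' := by
        have := List.getElem?_eq_getElem (show i + 1 < Q.length by omega)
        rw [hQi1] at this; injection this with h; exact h.symm
      refine ⟨?_, Q[i], haA, ?_⟩
      · have h := preim_symbol TX πb hQ hQi1
        rw [List.getElem?_take, if_pos (by omega), List.getElem?_eq_getElem hi] at h
        injection h with h; exact h.symm
      · rw [← ha'val]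
        exact preim_chain_rel TX πb hQ (by omega)

lemma g'walk_spec {Z : List AY} {V : List (Finset AX)} (hV : IsG'Walk TX πb Z V)
    (hlast : V.getLast? = Z.getLast?.map (fiber πb)) :
    ∀ i, i < Z.length → ∀ A : Finset AX, V[i]? = some A →
      ∀ a, a ∈ A ↔ ∃ P ∈ preim TX πb (Z.drop i), P.head? = some a := by
  obtain ⟨hlen, hsub, hedge⟩ := hV
  have key : ∀ j i, i < Z.length → Z.length - 1 - i = j → ∀ A : Finset AX,
      V[i]? = some A →
      ∀ a, a ∈ A ↔ ∃ P ∈ preim TX πb (Z.drop i), P.head? = some a := by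
    intro j
    induction j with
    | zero =>
      intro i hi hij A hA a
      have hieq : i = Z.length - 1 := by omega
      have hVi : V.getLast? = some A := by
        rw [List.getLast?_eq_getElem?, hlen, ← hieq, hA]
      rw [hlast, List.getLast?_eq_getElem?, ← hieq, List.getElem?_eq_getElem hi] at hVi
      have hAf : A = fiber πb Z[i] := by
        simp only [Option.map_some] at hVi
        injection hVi with h; exact h.symm
      have hdrop : Z.drop i = [Z[i]] := by
        rw [List.drop_eq_getElem_cons hi, List.drop_eq_nil_of_le (by omega)]
      subst hAf
      rw [mem_fiber_iff]
      constructor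
      · intro ha
        exact ⟨[a], by rw [hdrop]; exact preim_singleton TX πb ha, by simp⟩
      · rintro ⟨P, hP, hPh⟩
        rw [hdrop] at hP
        have h0 : P[0]? = some a := by rw [← hPh, List.head?_eq_getElem?]
        have := preim_symbol TX πb hP h0
        simp at this
        exact this.symm
    | succ j ih =>
      intro i hi hij A hA a
      have hi1 : i + 1 < Z.length := by omega
      have hi1V : i + 1 < V.length := by omega
      obtain ⟨A', hA'⟩ : ∃ A', V[i+1]? = some A' := ⟨V[i+1], List.getElem?_eq_getElem hi1V⟩
      have hedge_i := hedge i Z[i] Z[i+1] A A' (List.getElem?_eq_getElem hi)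
        (List.getElem?_eq_getElem hi1) hA hA'
      obtain ⟨-, -, -, hAeq⟩ := hedge_i
      dsimp only at hAeq
      have ihA := ih (i + 1) hi1 (by omega) A' hA'
      have hdrop : Z.drop i = Z[i] :: Z.drop (i + 1) := List.drop_eq_getElem_cons hi
      constructor
      · intro ha
        rw [hAeq, Finset.mem_filter] at ha
        obtain ⟨hfa, a', ha'A, hT⟩ := ha
        rw [mem_fiber_iff] at hfa
        obtain ⟨Q, hQ, hQh⟩ := (ihA a').1 ha'A
        refine ⟨a :: Q, ⟨⟨by simp, ?_⟩, ?_⟩, by simp⟩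
        · rw [show List.Chain' TX (a :: Q) = List.IsChain TX (a :: Q) from rfl, List.isChain_cons]
          refine ⟨?_, hQ.1.2⟩
          intro y hy
          rw [hQh] at hy
          simp only [Option.mem_some_iff] at hy
          rw [← hy]; exact hT
        · rw [List.map_cons, hQ.2, hdrop, hfa]
      · rintro ⟨P, hP, hPh⟩
        have hPlen : P.length = Z.length - i := by
          rw [preim_length_s12 TX πb hP, List.length_drop]
        have hP1 : P.drop 1 ∈ preim TX πb (Z.drop (i + 1)) := by
          have := preim_drop_s12 TX πb hP (n := 1) (by rw [List.length_drop]; omega)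
          rwa [List.drop_drop] at this
        have hP1len : 1 < P.length := by omega
        have hPh1 : (P.drop 1).head? = some P[1] := by
          rw [List.head?_drop, List.getElem?_eq_getElem hP1len]
        have ha'A : P[1] ∈ A' := (ihA P[1]).2 ⟨P.drop 1, hP1, hPh1⟩
        have hP0 : P[0]? = some a := by rw [← hPh, List.head?_eq_getElem?]
        have hP0val : P[0] = a := by
          have := List.getElem?_eq_getElem (show 0 < P.length by omega)
          rw [hP0] at this; injection this with h; exact h.symm
        rw [hAeq, Finset.mem_filter, mem_fiber_iff]
        refine ⟨?_, P[1], ha'A, ?_⟩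
        · have := preim_symbol TX πb hP hP0
          rw [List.getElem?_drop] at this
          simp only [Nat.add_zero] at this
          rw [List.getElem?_eq_getElem hi] at this
          injection this with h; exact h.symm
        · rw [← hP0val]
          exact preim_chain_rel TX πb hP (by omega)
  exact fun i hi => key (Z.length - 1 - i) i hi rfl

lemma gwalk_reach {Z : List AY} {U : List (Finset AX)} (hU : IsGWalk TX πb Z U)
    (hhead : U.head? = Z.head?.map (fiber πb)) :
    ∀ i, i < Z.length → ∀ A : Finset AX, U[i]? = some A → ∀ b, Z[i]? = some b →
      reachG TX πb (b, A) := by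
  obtain ⟨hlen, hsub, hedge⟩ := hU
  intro i
  induction i with
  | zero =>
    intro hi A hA b hb
    have hU0 : U[0]? = some (fiber πb b) := by
      rw [← List.head?_eq_getElem?, hhead, List.head?_eq_getElem?, hb]
      rfl
    rw [hA] at hU0
    have : A = fiber πb b := by injection hU0
    subst this
    exact ⟨b, Relation.ReflTransGen.refl⟩
  | succ i ih =>
    intro hi A' hA' b' hb'
    have hi' : i < Z.length := by omega
    have hiU : i < U.length := by omega
    obtain ⟨A, hA⟩ : ∃ A, U[i]? = some A := ⟨U[i], List.getElem?_eq_getElem hiU⟩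
    obtain ⟨b0, hpath⟩ := ih hi' A hA Z[i] (List.getElem?_eq_getElem hi')
    exact ⟨b0, hpath.tail (hedge i Z[i] b' A A' (List.getElem?_eq_getElem hi') hb' hA hA')⟩

lemma g'walk_reach {Z : List AY} {V : List (Finset AX)} (hV : IsG'Walk TX πb Z V)
    (hlast : V.getLast? = Z.getLast?.map (fiber πb)) :
    ∀ i, i < Z.length → ∀ A : Finset AX, V[i]? = some A → ∀ b, Z[i]? = some b →
      reachG' TX πb (b, A) := by
  obtain ⟨hlen, hsub, hedge⟩ := hV
  have key : ∀ j i, i < Z.length → Z.length - 1 - i = j → ∀ A : Finset AX,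
      V[i]? = some A → ∀ b, Z[i]? = some b → reachG' TX πb (b, A) := by
    intro j
    induction j with
    | zero =>
      intro i hi hij A hA b hb
      have hieq : i = Z.length - 1 := by omega
      have hVi : V.getLast? = some A := by
        rw [List.getLast?_eq_getElem?, hlen, ← hieq, hA]
      rw [hlast, List.getLast?_eq_getElem?, ← hieq, hb] at hVi
      have : A = fiber πb b := by
        simp only [Option.map_some] at hVi
        injection hVi with h; exact h.symm
      subst this
      exact ⟨b, Relation.ReflTransGen.refl⟩
    | succ j ih =>
      intro i hi hij A hA b hb
      have hi1 : i + 1 < Z.length := by omega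
      have hi1V : i + 1 < V.length := by omega
      obtain ⟨A', hA'⟩ : ∃ A', V[i+1]? = some A' := ⟨V[i+1], List.getElem?_eq_getElem hi1V⟩
      obtain ⟨b0, hpath⟩ := ih (i + 1) hi1 (by omega) A' hA' Z[i+1]
        (List.getElem?_eq_getElem hi1)
      exact ⟨b0, hpath.head (hedge i b Z[i+1] A A' hb (List.getElem?_eq_getElem hi1) hA hA')⟩
  exact fun i hi => key (Z.length - 1 - i) i hi rfl

end Aux

/-- If `W` is a magic block with magic coordinate `c`, the forward walk over
`W_0…W_c` from the full fiber of `W_0` and the backward walk over `W_c…W_k`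
into the full fiber of `W_k` end/start at vertices `A ∈ S`, `A' ∈ S'` with
`A ∩ A' = π_b^{-1}(W)_c`; hence
`min{|A ∩ A'| : A ∈ S, A' ∈ S', A ∩ A' ≠ ∅} ≤ d*_π`. -/
theorem magic_block_graphs {AX AY : Type*}
    [Fintype AX] [Fintype AY] [DecidableEq AX] [DecidableEq AY] [Nonempty AX]
    (TX : AX → AX → Prop) [DecidableRel TX] (πb : AX → AY)
    (hfin : ∃ K : ℕ, ∀ W : List AY, IsYBlock TX πb W → (preim TX πb W).ncard ≤ K)
    (hirr : ∀ U V : List AY, IsYBlock TX πb U → IsYBlock TX πb V →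
      ∃ C : List AY, IsYBlock TX πb (U ++ C ++ V))
    (W : List AY) (c : ℕ) (hW : IsYBlock TX πb W) (hc : c < W.length)
    (hmagic : (preimAt TX πb W c).ncard = dstar TX πb)
    (U V : List (Finset AX)) (A A' : Finset AX)
    (hU : IsGWalk TX πb (W.take (c + 1)) U)
    (hUhead : U.head? = (W.take (c + 1)).head?.map (fiber πb))
    (hUlast : U.getLast? = some A)
    (hV : IsG'Walk TX πb (W.drop c) V)
    (hVlast : V.getLast? = (W.drop c).getLast?.map (fiber πb))
    (hVhead : V.head? = some A') :
    (∀ b ∈ W[c]?, reachG TX πb (b, A)) ∧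
    (∀ b ∈ W[c]?, reachG' TX πb (b, A')) ∧
    (↑(A ∩ A') : Set AX) = preimAt TX πb W c ∧
    sInf {k | ∃ p p' : AY × Finset AX, reachG TX πb p ∧ reachG' TX πb p' ∧
        (p.2 ∩ p'.2).Nonempty ∧ (p.2 ∩ p'.2).card = k} ≤ dstar TX πb := by
  classical
  have hc1 : c + 1 ≤ W.length := hc
  have hZ1len : (W.take (c+1)).length = c + 1 := by simp; omega
  have hZ2len : (W.drop c).length = W.length - c := by simp
  have hUlen : U.length = c + 1 := hU.1.trans hZ1len
  have hVlen : V.length = W.length - c := hV.1.trans hZ2len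
  have hWc : W[c]? = some W[c] := List.getElem?_eq_getElem hc
  have hZ1c : (W.take (c+1))[c]? = some W[c] := by
    rw [List.getElem?_take, if_pos (by omega), hWc]
  have hZ2_0 : (W.drop c)[0]? = some W[c] := by
    rw [List.getElem?_drop]
    simpa using hWc
  have hUc : U[c]? = some A := by
    have h1 : U.length - 1 = c := by omega
    rw [← hUlast, List.getLast?_eq_getElem?, h1]
  have hV0 : V[0]? = some A' := by rw [← hVhead, List.head?_eq_getElem?]
  have hcZ1 : c < (W.take (c+1)).length := by omega
  have h0Z2 : 0 < (W.drop c).length := by omega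
  have hAspec := gwalk_spec TX πb hU hUhead c hcZ1 A hUc
  have hA'spec := g'walk_spec TX πb hV hVlast 0 h0Z2 A' hV0
  have htt : (W.take (c+1)).take (c+1) = W.take (c+1) := by
    rw [List.take_take]; simp
  rw [htt] at hAspec
  simp only [List.drop_zero] at hA'spec
  have hset : (↑(A ∩ A') : Set AX) = preimAt TX πb W c := by
    ext a
    simp only [Finset.coe_inter, Set.mem_inter_iff, Finset.mem_coe, preimAt,
      Set.mem_setOf_eq]
    rw [hAspec a, hA'spec a]
    constructor
    · rintro ⟨⟨P, hP, hPl⟩, Q, hQ, hQh⟩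
      have hPlen : P.length = c + 1 := (preim_length_s12 TX πb hP).trans hZ1len
      have hQlen : Q.length = W.length - c := (preim_length_s12 TX πb hQ).trans hZ2len
      have hQ0 : Q[0]? = some a := by rw [← hQh, List.head?_eq_getElem?]
      have hPc : P[c]? = some a := by
        have h1 : P.length - 1 = c := by omega
        rw [← hPl, List.getLast?_eq_getElem?, h1]
      refine ⟨P ++ Q.drop 1, ⟨⟨by simp [hP.1.1], ?_⟩, ?_⟩, ?_⟩
      · refine hP.1.2.append (hQ.1.2.drop 1) ?_
        intro x hx y hy
        rw [hPl] at hx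
        simp only [Option.mem_some_iff] at hx
        subst hx
        rw [List.head?_drop] at hy
        simp only [Option.mem_def] at hy
        have h1 : 1 < Q.length := by
          by_contra h
          rw [List.getElem?_eq_none (by omega)] at hy
          cases hy
        have hQ1 : Q[1] = y := by
          have h2 := List.getElem?_eq_getElem h1
          rw [hy] at h2
          injection h2 with h2
          exact h2.symm
        have hQ0' : Q[0] = a := by
          have h2 := List.getElem?_eq_getElem (show 0 < Q.length by omega)
          rw [hQ0] at h2
          injection h2 with h2
          exact h2.symm
        have := preim_chain_rel TX πb hQ (show 0 + 1 < Q.length by omega)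
        rw [← hQ1, ← hQ0']
        simpa using this
      · rw [List.map_append, hP.2, List.map_drop, hQ.2, List.drop_drop]
        exact List.take_append_drop (c+1) W
      · rw [List.getElem?_append_left (by omega), hPc]
    · rintro ⟨Q, hQ, hQc⟩
      have hQlen : Q.length = W.length := preim_length_s12 TX πb hQ
      refine ⟨⟨Q.take (c+1), preim_take_s12 TX πb hQ (by omega), ?_⟩,
        Q.drop c, preim_drop_s12 TX πb hQ hc, ?_⟩
      · have hl : (Q.take (c+1)).length - 1 = c := by simp; omega
        rw [List.getLast?_eq_getElem?, hl, List.getElem?_take, if_pos (by omega), hQc]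
      · rw [List.head?_drop]
        simpa using hQc
  have hreach1 : ∀ b ∈ W[c]?, reachG TX πb (b, A) := by
    intro b hb
    have hb' : (W.take (c+1))[c]? = some b := by
      rw [hZ1c]
      rw [hWc] at hb
      simpa using hb
    exact gwalk_reach TX πb hU hUhead c hcZ1 A hUc b hb'
  have hreach2 : ∀ b ∈ W[c]?, reachG' TX πb (b, A') := by
    intro b hb
    have hb' : (W.drop c)[0]? = some b := by
      rw [hZ2_0]
      rw [hWc] at hb
      simpa using hb
    exact g'walk_reach TX πb hV hVlast 0 h0Z2 A' hV0 b hb'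
  refine ⟨hreach1, hreach2, hset, ?_⟩
  obtain ⟨P, hP⟩ := hW
  have hPlen : P.length = W.length := preim_length_s12 TX πb hP
  have hmem : P[c] ∈ preimAt TX πb W c :=
    ⟨P, hP, List.getElem?_eq_getElem (by omega)⟩
  have hne : (A ∩ A').Nonempty := by
    rw [← Finset.coe_nonempty, hset]
    exact ⟨P[c], hmem⟩
  have hcard : (A ∩ A').card = dstar TX πb := by
    rw [← hmagic, ← hset, Set.ncard_coe_finset]
  exact Nat.sInf_le ⟨(W[c], A), (W[c], A'), hreach1 W[c] hWc, hreach2 W[c] hWc, hne, hcard⟩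
end
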